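/- Let {x_1,…,x_n} be a basis of the free group F_n and 1 ≤ k ≤ n−1. If φ̂ ∈ Aut(F_n) leaves both ⟨x_1,…,x_k⟩ and ⟨x_1,…,x_{k+1}⟩ invariant, then φ̂(x_{k+1}) = u·x_{k+1}^{±1}·v for some u, v ∈ ⟨x_1,…,x_k⟩. -/

import Mathlib

set_option linter.unusedSectionVars false
set_option linter.unusedVariables false
set_option maxHeartbeats 1000000

/-- The subgroup of `F_n` generated by the first `k` basis elements `x_1, …, x_k`
(indices `0, …, k-1`). -/
def firstKSubgroup (n k : ℕ) : Subgroup (FreeGroup (Fin n)) :=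
  Subgroup.closure (FreeGroup.of '' {i : Fin n | (i : ℕ) < k})

namespace AuxNT
open FreeGroup List

variable {α : Type*} [DecidableEq α]

/-- the letter that cancels `a` -/
def invL (a : α × Bool) : α × Bool := (a.1, !a.2)

lemma invL_invL (a : α × Bool) : invL (invL a) = a := by simp [invL]

/-- a word is reduced iff no adjacent cancelling pair -/
def IsRed (L : List (α × Bool)) : Prop := List.IsChain (fun a b => b ≠ invL a) L

lemma isRed_reduce (L : List (α × Bool)) : IsRed (FreeGroup.reduce L) := by
  induction L with
  | nil => exact List.isChain_nil
  | cons a L ih =>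
    rw [FreeGroup.reduce.cons]
    rcases h : FreeGroup.reduce L with _ | ⟨b, M⟩
    · simp [IsRed, List.isChain_singleton]
    · rw [h] at ih
      by_cases hc : a.1 = b.1 ∧ a.2 = !b.2
      · simpa [hc, IsRed] using ih.tail
      · simp only [if_neg hc]
        refine List.isChain_cons_cons.2 ⟨?_, ih⟩
        intro hb
        exact hc ⟨by rw [hb]; rfl, by rw [hb]; simp [invL]⟩

lemma reduce_eq_self (L : List (α × Bool)) (h : IsRed L) : FreeGroup.reduce L = L := by
  induction L with
  | nil => rfl
  | cons a L ih =>
    rw [FreeGroup.reduce.cons, ih h.tail]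
    rcases L with _ | ⟨b, M⟩
    · rfl
    · have hb : b ≠ invL a := (List.isChain_cons_cons.1 h).1
      have : ¬(a.1 = b.1 ∧ a.2 = !b.2) := by
        rintro ⟨h1, h2⟩
        exact hb (by simp [invL, Prod.ext_iff, h1.symm, h2])
      simp [this]

lemma toWord_mk_eq (L : List (α × Bool)) (h : IsRed L) : (FreeGroup.mk L).toWord = L := by
  rw [FreeGroup.toWord_mk, reduce_eq_self L h]

lemma isRed_toWord (g : FreeGroup α) : IsRed g.toWord := by
  have := isRed_reduce g.toWord
  rwa [FreeGroup.reduce_toWord] at this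

lemma isRed_invRev {L : List (α × Bool)} (h : IsRed L) : IsRed (FreeGroup.invRev L) := by
  unfold FreeGroup.invRev
  rw [IsRed, List.isChain_reverse, List.isChain_map]
  refine h.imp ?_
  intro a b hab
  intro hc
  apply hab
  have := congrArg invL hc
  rw [invL_invL] at this
  simpa [invL, Prod.ext_iff] using this.symm

lemma isRed_append_left {L₁ L₂ : List (α × Bool)} (h : IsRed (L₁ ++ L₂)) : IsRed L₁ :=
  (List.isChain_append.1 h).1

lemma isRed_append_right {L₁ L₂ : List (α × Bool)} (h : IsRed (L₁ ++ L₂)) : IsRed L₂ :=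
  (List.isChain_append.1 h).2.1

lemma junction {L₁ L₂ : List (α × Bool)} (h : IsRed (L₁ ++ L₂)) :
    ∀ x ∈ L₁.getLast?, ∀ y ∈ L₂.head?, y ≠ invL x :=
  (List.isChain_append.1 h).2.2

/-- key: multiply two elements given by reduced words with an ok junction -/
lemma toWord_mk_mul (L₁ L₂ : List (α × Bool)) (h : IsRed (L₁ ++ L₂)) :
    (FreeGroup.mk L₁ * FreeGroup.mk L₂).toWord = L₁ ++ L₂ := by
  rw [FreeGroup.mul_mk, toWord_mk_eq _ h]


open FreeGroup List

lemma of_eq_mk {α : Type*} (a : α) : FreeGroup.of a = FreeGroup.mk [(a, true)] := rfl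

lemma mk_mem_firstK {n m : ℕ} (L : List (Fin n × Bool)) (h : ∀ l ∈ L, (l.1 : ℕ) < m) :
    FreeGroup.mk L ∈ firstKSubgroup n m := by
  induction L with
  | nil => exact (firstKSubgroup n m).one_mem
  | cons a L ih =>
    have : FreeGroup.mk (a :: L) = FreeGroup.mk [a] * FreeGroup.mk L := by
      rw [FreeGroup.mul_mk]; rfl
    rw [this]
    refine Subgroup.mul_mem _ ?_ (ih fun l hl => h l (List.mem_cons_of_mem _ hl))
    have ha : (a.1 : ℕ) < m := h a (List.mem_cons_self)
    have hofmem : FreeGroup.of a.1 ∈ firstKSubgroup n m :=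
      Subgroup.subset_closure ⟨a.1, ha, rfl⟩
    rcases a with ⟨i, b⟩
    cases b
    · have : FreeGroup.mk [((i : Fin n), false)] = (FreeGroup.of i)⁻¹ := by
        rw [of_eq_mk, FreeGroup.inv_mk]; rfl
      rw [this]; exact Subgroup.inv_mem _ hofmem
    · rw [← of_eq_mk]; exact hofmem

lemma letters_lt_of_mem_firstK {n m : ℕ} {g : FreeGroup (Fin n)}
    (hg : g ∈ firstKSubgroup n m) : ∀ l ∈ g.toWord, (l.1 : ℕ) < m := by
  refine Subgroup.closure_induction ?_ ?_ ?_ ?_ hg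
  · rintro g ⟨i, hi, rfl⟩ l hl
    rw [FreeGroup.toWord_of] at hl
    simp only [List.mem_singleton] at hl
    subst hl; exact hi
  · intro l hl; rw [FreeGroup.toWord_one] at hl; cases hl
  · intro g h _ _ ihg ihh l hl
    have := (FreeGroup.toWord_mul_sublist g h).subset hl
    rcases List.mem_append.1 this with h' | h'
    · exact ihg l h'
    · exact ihh l h'
  · intro g _ ih l hl
    rw [FreeGroup.toWord_inv] at hl
    unfold FreeGroup.invRev at hl
    rw [List.mem_reverse, List.mem_map] at hl
    rcases hl with ⟨a, ha, rfl⟩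
    exact ih a ha

lemma mem_firstK_iff {n m : ℕ} {g : FreeGroup (Fin n)} :
    g ∈ firstKSubgroup n m ↔ ∀ l ∈ g.toWord, (l.1 : ℕ) < m :=
  ⟨letters_lt_of_mem_firstK, fun h => by
    have := mk_mem_firstK g.toWord h
    rwa [FreeGroup.mk_toWord] at this⟩


def cycRed : List (α × Bool) → List (α × Bool) × List (α × Bool)
  | [] => ([], [])
  | [a] => ([], [a])
  | a :: b :: L =>
    if (b :: L).getLast (by simp) = invL a then
      ((a :: (cycRed ((b :: L).dropLast)).1), (cycRed ((b :: L).dropLast)).2)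
    else ([], a :: b :: L)
termination_by L => L.length
decreasing_by
  simp [List.length_dropLast]

lemma invRev_eq {L : List (α × Bool)} : FreeGroup.invRev L = (L.map invL).reverse := rfl

lemma invRev_cons (a : α × Bool) (L : List (α × Bool)) :
    FreeGroup.invRev (a :: L) = FreeGroup.invRev L ++ [invL a] := by
  simp [invRev_eq]

lemma cycRed_decomp (L : List (α × Bool)) :
    L = (cycRed L).1 ++ (cycRed L).2 ++ FreeGroup.invRev (cycRed L).1 := by
  induction L using cycRed.induct with
  | case1 => simp [cycRed, FreeGroup.invRev]
  | case2 a => simp [cycRed, FreeGroup.invRev]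
  | case3 a b L hlast ih =>
    rw [cycRed, if_pos hlast]
    simp only
    rw [invRev_cons]
    have hd : b :: L = (b :: L).dropLast ++ [(b :: L).getLast (by simp)] :=
      (List.dropLast_append_getLast _).symm
    conv_lhs => rw [hd, ih]
    rw [hlast]
    simp
  | case4 a b L hlast =>
    rw [cycRed, if_neg hlast]
    simp [FreeGroup.invRev]

lemma cycRed_cyc (L : List (α × Bool)) :
    ∀ ml ∈ (cycRed L).2.getLast?, ∀ mh ∈ (cycRed L).2.head?, mh ≠ invL ml := by
  induction L using cycRed.induct with
  | case1 => simp [cycRed]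
  | case2 a =>
    simp only [cycRed, List.getLast?_singleton, List.head?_cons, Option.mem_def,
      Option.some.injEq]
    rintro ml rfl mh rfl
    simp [invL]
    intro h
    cases a; simp_all
  | case3 a b L hlast ih =>
    rw [cycRed, if_pos hlast]; simpa using ih
  | case4 a b L hlast =>
    rw [cycRed, if_neg hlast]
    simp only
    intro ml hml mh hmh
    simp only [List.head?_cons, Option.mem_def, Option.some.injEq] at hmh
    subst hmh
    have hml' : ml = (b :: L).getLast (by simp) := by
      have h2 : (a :: b :: L).getLast? = some ((b :: L).getLast (by simp)) := by
        rw [List.getLast?_cons_cons, List.getLast?_eq_getLast (by simp)]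
      rw [h2, Option.mem_def, Option.some.injEq] at hml
      exact hml.symm
    intro h
    apply hlast
    rw [hml'] at h
    rw [h]
    simp [invL]

lemma cycRed_head (L : List (α × Bool)) :
    (cycRed L).1 ≠ [] → (cycRed L).1.head? = L.head? := by
  induction L using cycRed.induct with
  | case1 => simp [cycRed]
  | case2 a => simp [cycRed]
  | case3 a b L hlast ih => rw [cycRed, if_pos hlast]; simp
  | case4 a b L hlast => rw [cycRed, if_neg hlast]; simp

lemma cycRed_nil_snd (L : List (α × Bool)) :
    (cycRed L).1 = [] → (cycRed L).2 = L := by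
  induction L using cycRed.induct with
  | case1 => simp [cycRed]
  | case2 a => simp [cycRed]
  | case3 a b L hlast ih => rw [cycRed, if_pos hlast]; simp
  | case4 a b L hlast => rw [cycRed, if_neg hlast]; simp


lemma head?_invRev (L : List (α × Bool)) :
    (FreeGroup.invRev L).head? = L.getLast?.map invL := by
  rw [invRev_eq, List.head?_reverse, List.getLast?_map]

lemma getLast?_invRev (L : List (α × Bool)) :
    (FreeGroup.invRev L).getLast? = L.head?.map invL := by
  rw [invRev_eq, List.getLast?_reverse, List.head?_map]

lemma countP_invRev (q : α × Bool → Bool) (hq : ∀ a, q (invL a) = q a)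
    (L : List (α × Bool)) : (FreeGroup.invRev L).countP q = L.countP q := by
  rw [invRev_eq, List.countP_reverse, List.countP_map]
  congr 1
  funext a
  simp [Function.comp, hq]

section FlatRep

variable (M : List (α × Bool))

def flatRep (j : ℕ) : List (α × Bool) := (List.replicate j M).flatten

lemma flatRep_zero : flatRep M 0 = [] := rfl

lemma flatRep_succ (j : ℕ) : flatRep M (j + 1) = M ++ flatRep M j := by
  simp [flatRep, List.replicate_succ]

lemma mk_flatRep (j : ℕ) : FreeGroup.mk (flatRep M j) = (FreeGroup.mk M) ^ j :=
  (FreeGroup.pow_mk j).symm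

variable (hM : M ≠ [])

include hM in
lemma flatRep_head (j : ℕ) : (flatRep M (j + 1)).head? = M.head? := by
  rw [flatRep_succ, List.head?_append]
  rcases List.exists_cons_of_ne_nil hM with ⟨a, M', rfl⟩
  simp

include hM in
lemma flatRep_last (j : ℕ) : (flatRep M (j + 1)).getLast? = M.getLast? := by
  induction j with
  | zero => simp [flatRep_succ, flatRep_zero]
  | succ j ih =>
    rw [flatRep_succ, List.getLast?_append, ih, Option.or_self]

variable (hMred : IsRed M) (hcyc : ∀ ml ∈ M.getLast?, ∀ mh ∈ M.head?, mh ≠ invL ml)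

include hM hMred hcyc in
lemma flatRep_isRed (j : ℕ) : IsRed (flatRep M j) := by
  induction j with
  | zero => exact List.isChain_nil
  | succ j ih =>
    rw [flatRep_succ]
    rw [IsRed, List.isChain_append]
    refine ⟨hMred, ih, ?_⟩
    intro x hx y hy
    rcases j with _ | j
    · simp [flatRep_zero] at hy
    · rw [flatRep_head M hM] at hy
      exact hcyc x hx y hy

lemma flatRep_countP (q : α × Bool → Bool) (j : ℕ) :
    M.countP q ≤ (flatRep M (j + 1)).countP q := by
  rw [flatRep_succ, List.countP_append]
  omega

end FlatRep

section Mid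

variable (M : List (α × Bool))

def midW (m : ℤ) : List (α × Bool) :=
  if 0 ≤ m then flatRep M m.toNat else FreeGroup.invRev (flatRep M (-m).toNat)

lemma mk_midW (m : ℤ) : FreeGroup.mk (midW M m) = (FreeGroup.mk M) ^ m := by
  unfold midW
  split
  · rw [mk_flatRep, ← zpow_natCast]
    congr 1
    omega
  · rw [← FreeGroup.inv_mk, mk_flatRep, ← zpow_natCast, ← zpow_neg]
    congr 1
    omega

variable (hM : M ≠ []) (hMred : IsRed M)
  (hcyc : ∀ ml ∈ M.getLast?, ∀ mh ∈ M.head?, mh ≠ invL ml)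
variable {m : ℤ} (hm : m ≠ 0)

include hM hm in
lemma midW_head : (midW M m).head? =
    (if 0 ≤ m then M.head? else M.getLast?.map invL) := by
  unfold midW
  split
  · have : m.toNat = (m.toNat - 1) + 1 := by omega
    rw [this, flatRep_head M hM]
  · have : (-m).toNat = ((-m).toNat - 1) + 1 := by omega
    rw [head?_invRev, this, flatRep_last M hM]

include hM hm in
lemma midW_last : (midW M m).getLast? =
    (if 0 ≤ m then M.getLast? else M.head?.map invL) := by
  unfold midW
  split
  · have : m.toNat = (m.toNat - 1) + 1 := by omega
    rw [this, flatRep_last M hM]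
  · have : (-m).toNat = ((-m).toNat - 1) + 1 := by omega
    rw [getLast?_invRev, this, flatRep_head M hM]

lemma isRed_invRev' {L : List (α × Bool)} (h : IsRed L) : IsRed (FreeGroup.invRev L) := by
  rw [invRev_eq, IsRed, List.isChain_reverse, List.isChain_map]
  refine h.imp ?_
  intro a b hab
  intro hc
  apply hab
  have := congrArg invL hc
  rw [show ∀ x : α × Bool, invL (invL x) = x by intro x; simp [invL]] at this
  simpa [invL, Prod.ext_iff] using this.symm

include hM hMred hcyc in
lemma midW_isRed : IsRed (midW M m) := by
  unfold midW
  split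
  · exact flatRep_isRed M hM hMred hcyc _
  · exact isRed_invRev' (flatRep_isRed M hM hMred hcyc _)

include hM hm in
lemma midW_countP (q : α × Bool → Bool) (hq : ∀ a, q (invL a) = q a) :
    M.countP q ≤ (midW M m).countP q := by
  unfold midW
  split
  · have : m.toNat = (m.toNat - 1) + 1 := by omega
    rw [this]
    exact flatRep_countP M q _
  · rw [countP_invRev q hq]
    have : (-m).toNat = ((-m).toNat - 1) + 1 := by omega
    rw [this]
    exact flatRep_countP M q _

include hM hm in
lemma midW_ne_nil : midW M m ≠ [] := by
  intro h
  have := congrArg List.head? h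
  rw [midW_head M hM hm] at this
  rcases List.exists_cons_of_ne_nil hM with ⟨a, M', rfl⟩
  split at this
  · simp at this
  · rw [List.getLast?_eq_getLast (by simp)] at this
    simp at this

end Mid


lemma invL_invL' (a : α × Bool) : invL (invL a) = a := by simp [invL]

lemma invL_inj {a b : α × Bool} (h : invL a = invL b) : a = b := by
  have := congrArg invL h
  rwa [invL_invL', invL_invL'] at this

section Block

variable (C M : List (α × Bool))

/-- the reduced word of `c * wt^m * c⁻¹` -/
def blockW (m : ℤ) : List (α × Bool) := C ++ midW M m ++ FreeGroup.invRev C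

lemma mk_blockW (m : ℤ) : FreeGroup.mk (blockW C M m)
    = FreeGroup.mk C * (FreeGroup.mk M) ^ m * (FreeGroup.mk C)⁻¹ := by
  unfold blockW
  rw [← FreeGroup.mul_mk (L₁ := C ++ midW M m), ← FreeGroup.mul_mk, mk_midW,
    ← FreeGroup.inv_mk]

variable (hred : IsRed (C ++ M ++ FreeGroup.invRev C)) (hM : M ≠ [])
  (hcyc : ∀ ml ∈ M.getLast?, ∀ mh ∈ M.head?, mh ≠ invL ml)
variable {m : ℤ} (hm : m ≠ 0)

include hred in
lemma hCred : IsRed C := (List.isChain_append.1 ((List.isChain_append.1 hred).1)).1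

include hred in
lemma hMred' : IsRed M := (List.isChain_append.1 ((List.isChain_append.1 hred).1)).2.1

include hred in
lemma jn1 : ∀ cl ∈ C.getLast?, ∀ mh ∈ M.head?, mh ≠ invL cl :=
  (List.isChain_append.1 ((List.isChain_append.1 hred).1)).2.2

include hred hM in
lemma jn2 : ∀ cl ∈ C.getLast?, ∀ ml ∈ M.getLast?, cl ≠ ml := by
  intro cl hcl ml hml
  have h2 := (List.isChain_append.1 hred).2.2
  have hx : ml ∈ (C ++ M).getLast? := by
    rw [List.getLast?_append_of_ne_nil _ hM]; exact hml
  have hy : invL cl ∈ (FreeGroup.invRev C).head? := by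
    rw [head?_invRev, hcl]; rfl
  have := h2 ml hx (invL cl) hy
  intro hc
  exact this (by rw [hc])

include hred hM hcyc hm in
lemma blockW_isRed : IsRed (blockW C M m) := by
  unfold blockW
  rw [IsRed, List.isChain_append]
  refine ⟨?_, isRed_invRev' (hCred C M hred), ?_⟩
  · rw [List.isChain_append]
    refine ⟨hCred C M hred, midW_isRed M hM (hMred' C M hred) hcyc, ?_⟩
    intro x hx y hy
    rw [midW_head M hM hm] at hy
    split at hy
    · exact jn1 C M hred x hx y hy
    · rcases Option.map_eq_some_iff.1 hy with ⟨ml, hml, rfl⟩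
      intro hc
      exact jn2 C M hred hM x hx ml hml (invL_inj hc.symm)
  · intro x hx y hy
    rw [List.getLast?_append_of_ne_nil _ (midW_ne_nil M hM hm), midW_last M hM hm] at hx
    rw [head?_invRev] at hy
    rcases Option.map_eq_some_iff.1 hy with ⟨cl, hcl, rfl⟩
    split at hx
    · intro hc
      exact jn2 C M hred hM cl hcl x hx (invL_inj hc)
    · rcases Option.map_eq_some_iff.1 hx with ⟨mh, hmh, rfl⟩
      rw [invL_invL']
      intro hc
      exact jn1 C M hred cl hcl mh hmh hc.symm

include hM hm in
lemma blockW_ne_nil : blockW C M m ≠ [] := by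
  unfold blockW
  intro h
  rcases List.append_eq_nil_iff.1 h with ⟨h1, -⟩
  rcases List.append_eq_nil_iff.1 h1 with ⟨-, h2⟩
  exact midW_ne_nil M hM hm h2

include hM hm in
lemma blockW_head : (blockW C M m).head? =
    (if hC : C = [] then (midW M m).head? else C.head?) := by
  unfold blockW
  split
  · subst ‹C = []›
    simp [FreeGroup.invRev]
  · rcases List.exists_cons_of_ne_nil ‹C ≠ []› with ⟨a, t, rfl⟩
    simp [List.head?_append]

include hM hm in
lemma blockW_last : (blockW C M m).getLast? =
    (if hC : C = [] then (midW M m).getLast? else C.head?.map invL) := by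
  unfold blockW
  split
  · subst ‹C = []›
    simp [FreeGroup.invRev]
  · have hne : FreeGroup.invRev C ≠ [] := by
      intro h
      have := congrArg List.length h
      rw [FreeGroup.invRev_length] at this
      exact ‹C ≠ []› (List.length_eq_zero_iff.1 this)
    rw [List.getLast?_append_of_ne_nil _ hne, getLast?_invRev]

lemma blockW_countP (q : α × Bool → Bool) (hq : ∀ a, q (invL a) = q a) :
    (blockW C M m).countP q = C.countP q + (midW M m).countP q + C.countP q := by
  unfold blockW
  rw [List.countP_append, List.countP_append, countP_invRev q hq]

end Block



def qk (n k : ℕ) : Fin n × Bool → Bool := fun a => decide ((a.1 : ℕ) = k)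

lemma qk_invL (n k : ℕ) : ∀ a, qk n k (invL a) = qk n k a := by
  intro a; simp [qk, invL]; rfl

variable {n k : ℕ}

/-- Normal forms of nontrivial alternating products of `H`-elements and powers of
`c·wt·c⁻¹` where `c = mk C`, `wt = mk M`. -/
inductive TT (C M : List (Fin n × Bool)) (k : ℕ) : FreeGroup (Fin n) → Prop
  | base (m : ℤ) (hm : m ≠ 0) (h : FreeGroup (Fin n)) (hh : h ∈ firstKSubgroup n k) :
      TT C M k (FreeGroup.mk C * FreeGroup.mk M ^ m * (FreeGroup.mk C)⁻¹ * h)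
  | cons (m : ℤ) (hm : m ≠ 0) (h : FreeGroup (Fin n)) (hh : h ∈ firstKSubgroup n k)
      (hne : h ≠ 1) (t : FreeGroup (Fin n)) (ht : TT C M k t) :
      TT C M k (FreeGroup.mk C * FreeGroup.mk M ^ m * (FreeGroup.mk C)⁻¹ * h * t)

section Machine

variable (C M : List (Fin n × Bool))
variable (hred : IsRed (C ++ M ++ FreeGroup.invRev C)) (hM : M ≠ [])
  (hcyc : ∀ ml ∈ M.getLast?, ∀ mh ∈ M.head?, mh ≠ invL ml)
  (hbh : ∀ m : ℤ, m ≠ 0 → ∀ a ∈ (blockW C M m).head?, (a.1 : ℕ) = k)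
  (hbl : ∀ m : ℤ, m ≠ 0 → ∀ a ∈ (blockW C M m).getLast?, (a.1 : ℕ) = k)
  (hbc : ∀ m : ℤ, m ≠ 0 → 2 ≤ (blockW C M m).countP (qk n k))

include hred hM hcyc hbh hbl hbc in
lemma TT_word : ∀ t, TT C M k t →
    t.toWord ≠ [] ∧ (∀ a ∈ t.toWord.head?, (a.1 : ℕ) = k) ∧
      2 ≤ t.toWord.countP (qk n k) := by
  intro t ht
  induction ht with
  | base m hm h hh =>
    have hbw : IsRed (blockW C M m) := blockW_isRed C M hred hM hcyc hm
    have hjoin : IsRed (blockW C M m ++ h.toWord) := by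
      rw [IsRed, List.isChain_append]
      refine ⟨hbw, isRed_toWord h, ?_⟩
      intro x hx y hy
      have hyk : (y.1 : ℕ) < k :=
        letters_lt_of_mem_firstK hh y (List.mem_of_mem_head? hy)
      have hxk : (x.1 : ℕ) = k := hbl m hm x hx
      intro hc
      rw [hc] at hyk
      simp only [invL] at hyk
      omega
    have heq : (FreeGroup.mk C * FreeGroup.mk M ^ m * (FreeGroup.mk C)⁻¹ * h).toWord
        = blockW C M m ++ h.toWord := by
      conv_lhs => rw [← mk_blockW, ← FreeGroup.mk_toWord (x := h)]
      exact toWord_mk_mul _ _ hjoin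
    rw [heq]
    have hbne := blockW_ne_nil C M hM hm
    refine ⟨by simp [hbne], ?_, ?_⟩
    · intro a ha
      rw [List.head?_append] at ha
      rcases List.exists_cons_of_ne_nil hbne with ⟨b, t', hb⟩
      have hbmem : b ∈ (blockW C M m).head? := by rw [hb]; rfl
      rw [hb] at ha
      have : a = b := by
        rw [show ((b :: t').head?.or h.toWord.head?) = some b from rfl] at ha
        exact (Option.some_inj.1 (Option.mem_def.1 ha)).symm
      subst this
      exact hbh m hm a hbmem
    · rw [List.countP_append]
      have := hbc m hm
      omega
  | cons m hm h hh hne t ht ih =>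
    have hbw : IsRed (blockW C M m) := blockW_isRed C M hred hM hcyc hm
    have hhne : h.toWord ≠ [] := fun hc => hne (FreeGroup.toWord_eq_nil_iff.1 hc)
    have hjoin : IsRed (blockW C M m ++ h.toWord) := by
      rw [IsRed, List.isChain_append]
      refine ⟨hbw, isRed_toWord h, ?_⟩
      intro x hx y hy
      have hyk : (y.1 : ℕ) < k :=
        letters_lt_of_mem_firstK hh y (List.mem_of_mem_head? hy)
      have hxk : (x.1 : ℕ) = k := hbl m hm x hx
      intro hc
      rw [hc] at hyk
      simp only [invL] at hyk
      omega
    have hjoin2 : IsRed ((blockW C M m ++ h.toWord) ++ t.toWord) := by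
      rw [IsRed, List.isChain_append]
      refine ⟨hjoin, isRed_toWord t, ?_⟩
      intro x hx y hy
      rw [List.getLast?_append_of_ne_nil _ hhne] at hx
      have hxk : (x.1 : ℕ) < k :=
        letters_lt_of_mem_firstK hh x (List.mem_of_mem_getLast? hx)
      have hyk : (y.1 : ℕ) = k := ih.2.1 y hy
      intro hc
      rw [hc] at hyk
      simp only [invL] at hyk
      omega
    have heq1 : (FreeGroup.mk C * FreeGroup.mk M ^ m * (FreeGroup.mk C)⁻¹ * h).toWord
        = blockW C M m ++ h.toWord := by
      conv_lhs => rw [← mk_blockW, ← FreeGroup.mk_toWord (x := h)]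
      exact toWord_mk_mul _ _ hjoin
    have heq : (FreeGroup.mk C * FreeGroup.mk M ^ m * (FreeGroup.mk C)⁻¹ * h * t).toWord
        = (blockW C M m ++ h.toWord) ++ t.toWord := by
      conv_lhs => rw [show FreeGroup.mk C * FreeGroup.mk M ^ m * (FreeGroup.mk C)⁻¹ * h * t
        = (FreeGroup.mk C * FreeGroup.mk M ^ m * (FreeGroup.mk C)⁻¹ * h) * t from rfl,
        ← FreeGroup.mk_toWord (x := FreeGroup.mk C * FreeGroup.mk M ^ m * (FreeGroup.mk C)⁻¹ * h),
        ← FreeGroup.mk_toWord (x := t), heq1]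
      exact toWord_mk_mul _ _ hjoin2
    rw [heq]
    have hbne := blockW_ne_nil C M hM hm
    refine ⟨by simp [hbne], ?_, ?_⟩
    · intro a ha
      rw [List.head?_append, List.head?_append] at ha
      rcases List.exists_cons_of_ne_nil hbne with ⟨b, t', hb⟩
      have hbmem : b ∈ (blockW C M m).head? := by rw [hb]; rfl
      rw [hb] at ha
      have : a = b := by
        rw [show (((b :: t').head?.or h.toWord.head?).or t.toWord.head?) = some b from rfl] at ha
        exact (Option.some_inj.1 (Option.mem_def.1 ha)).symm
      subst this
      exact hbh m hm a hbmem
    · rw [List.countP_append, List.countP_append]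
      have := hbc m hm
      omega

/-- every element of the subgroup generated by `H` and `w₁` is `H` or a `TT`-form -/
def SS (C M : List (Fin n × Bool)) (k : ℕ) (g : FreeGroup (Fin n)) : Prop :=
  g ∈ firstKSubgroup n k ∨
    ∃ h₀ t, h₀ ∈ firstKSubgroup n k ∧ TT C M k t ∧ g = h₀ * t

lemma SS_one : SS C M k 1 := Or.inl (Subgroup.one_mem _)

lemma SS_mul_H {h g : FreeGroup (Fin n)} (hh : h ∈ firstKSubgroup n k)
    (hg : SS C M k g) : SS C M k (h * g) := by
  rcases hg with hg | ⟨h₀, t, hh₀, ht, rfl⟩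
  · exact Or.inl (Subgroup.mul_mem _ hh hg)
  · exact Or.inr ⟨h * h₀, t, Subgroup.mul_mem _ hh hh₀, ht, (mul_assoc _ _ _).symm⟩

lemma SS_mul_block {g : FreeGroup (Fin n)} (m : ℤ) (hm : m ≠ 0)
    (hg : SS C M k g) :
    SS C M k (FreeGroup.mk C * FreeGroup.mk M ^ m * (FreeGroup.mk C)⁻¹ * g) := by
  rcases hg with hg | ⟨h₀, t, hh₀, ht, rfl⟩
  · exact Or.inr ⟨1, _, Subgroup.one_mem _, TT.base m hm g hg, (one_mul _).symm⟩
  · by_cases h1 : h₀ = 1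
    · subst h1
      rw [one_mul]
      cases ht with
      | base m' hm' h hh =>
        have key : FreeGroup.mk C * FreeGroup.mk M ^ m * (FreeGroup.mk C)⁻¹ *
            (FreeGroup.mk C * FreeGroup.mk M ^ m' * (FreeGroup.mk C)⁻¹ * h)
            = FreeGroup.mk C * FreeGroup.mk M ^ (m + m') * (FreeGroup.mk C)⁻¹ * h := by
          rw [zpow_add]; group
        rw [key]
        by_cases hmm : m + m' = 0
        · rw [hmm, show FreeGroup.mk C * FreeGroup.mk M ^ (0 : ℤ) * (FreeGroup.mk C)⁻¹ * h
            = h by group]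
          exact Or.inl hh
        · exact Or.inr ⟨1, _, Subgroup.one_mem _, TT.base _ hmm h hh, (one_mul _).symm⟩
      | cons m' hm' h hh hne t' ht' =>
        have key : FreeGroup.mk C * FreeGroup.mk M ^ m * (FreeGroup.mk C)⁻¹ *
            (FreeGroup.mk C * FreeGroup.mk M ^ m' * (FreeGroup.mk C)⁻¹ * h * t')
            = FreeGroup.mk C * FreeGroup.mk M ^ (m + m') * (FreeGroup.mk C)⁻¹ * (h * t') := by
          rw [zpow_add]; group
        rw [key]
        by_cases hmm : m + m' = 0
        · rw [hmm, show FreeGroup.mk C * FreeGroup.mk M ^ (0 : ℤ) * (FreeGroup.mk C)⁻¹ * (h * t')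
            = h * t' by group]
          exact Or.inr ⟨h, t', hh, ht', rfl⟩
        · exact Or.inr ⟨1, _, Subgroup.one_mem _, TT.cons _ hmm h hh hne t' ht', by group⟩
    · exact Or.inr ⟨1, _, Subgroup.one_mem _, TT.cons m hm h₀ hh₀ h1 t ht, by group⟩

include hred hM hcyc hbh hbl hbc in
lemma x_not_mem (hk2 : k < n) :
    FreeGroup.of (⟨k, hk2⟩ : Fin n) ∉ Subgroup.closure
      ((FreeGroup.of '' {i : Fin n | (i : ℕ) < k}) ∪
        {FreeGroup.mk C * FreeGroup.mk M * (FreeGroup.mk C)⁻¹}) := by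
  intro hx
  rw [← Subgroup.mem_toSubmonoid, Subgroup.closure_toSubmonoid] at hx
  obtain ⟨Lst, hLs, hprod⟩ := Submonoid.exists_list_of_mem_closure hx
  have hSS : ∀ L : List (FreeGroup (Fin n)),
      (∀ y ∈ L, y ∈ ((FreeGroup.of '' {i : Fin n | (i : ℕ) < k}) ∪
        {FreeGroup.mk C * FreeGroup.mk M * (FreeGroup.mk C)⁻¹} ∪
        ((FreeGroup.of '' {i : Fin n | (i : ℕ) < k}) ∪
        {FreeGroup.mk C * FreeGroup.mk M * (FreeGroup.mk C)⁻¹})⁻¹ : Set _)) →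
      SS C M k L.prod := by
    intro L
    induction L with
    | nil => intro _; exact SS_one C M
    | cons a L ihL =>
      intro hmem
      rw [List.prod_cons]
      have ha := hmem a (List.mem_cons_self)
      have hrest := ihL (fun y hy => hmem y (List.mem_cons_of_mem _ hy))
      rcases ha with (⟨i, hi, rfl⟩ | ha) | ha
      · exact SS_mul_H C M (Subgroup.subset_closure ⟨i, hi, rfl⟩) hrest
      · rw [Set.mem_singleton_iff] at ha
        subst ha
        have : FreeGroup.mk C * FreeGroup.mk M * (FreeGroup.mk C)⁻¹
            = FreeGroup.mk C * FreeGroup.mk M ^ (1 : ℤ) * (FreeGroup.mk C)⁻¹ := by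
          rw [zpow_one]
        rw [this]
        exact SS_mul_block C M 1 one_ne_zero hrest
      · rw [Set.mem_inv] at ha
        rcases ha with ⟨i, hi, hii⟩ | ha
        · have : a = (FreeGroup.of i)⁻¹ := inv_eq_iff_eq_inv.1 hii.symm
          subst this
          exact SS_mul_H C M (Subgroup.inv_mem _ (Subgroup.subset_closure ⟨i, hi, rfl⟩))
            hrest
        · rw [Set.mem_singleton_iff] at ha
          have : a = (FreeGroup.mk C * FreeGroup.mk M * (FreeGroup.mk C)⁻¹)⁻¹ :=
            inv_eq_iff_eq_inv.1 ha
          subst this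
          have : (FreeGroup.mk C * FreeGroup.mk M * (FreeGroup.mk C)⁻¹)⁻¹
              = FreeGroup.mk C * FreeGroup.mk M ^ (-1 : ℤ) * (FreeGroup.mk C)⁻¹ := by
            group
          rw [this]
          exact SS_mul_block C M (-1) (by norm_num) hrest
  have hx' : SS C M k (FreeGroup.of (⟨k, hk2⟩ : Fin n)) := by
    rw [← hprod]
    exact hSS Lst hLs
  have hxw : (FreeGroup.of (⟨k, hk2⟩ : Fin n)).toWord = [((⟨k, hk2⟩ : Fin n), true)] :=
    FreeGroup.toWord_of _
  rcases hx' with hxH | ⟨h₀, t, hh₀, ht, hxe⟩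
  · have := letters_lt_of_mem_firstK hxH ((⟨k, hk2⟩ : Fin n), true) (by rw [hxw]; simp)
    simp at this
  · obtain ⟨htne, hthead, htcount⟩ := TT_word C M hred hM hcyc hbh hbl hbc t ht
    have hjoin : IsRed (h₀.toWord ++ t.toWord) := by
      rw [IsRed, List.isChain_append]
      refine ⟨isRed_toWord _, isRed_toWord _, ?_⟩
      intro x hx' y hy
      have hxk : (x.1 : ℕ) < k :=
        letters_lt_of_mem_firstK hh₀ x (List.mem_of_mem_getLast? hx')
      have hyk : (y.1 : ℕ) = k := hthead y hy
      intro hc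
      rw [hc] at hyk
      simp only [invL] at hyk
      omega
    have heq : (FreeGroup.of (⟨k, hk2⟩ : Fin n)).toWord = h₀.toWord ++ t.toWord := by
      rw [hxe]
      conv_lhs => rw [← FreeGroup.mk_toWord (x := h₀), ← FreeGroup.mk_toWord (x := t)]
      exact toWord_mk_mul _ _ hjoin
    rw [hxw] at heq
    have hcount := congrArg (List.countP (qk n k)) heq
    rw [List.countP_append] at hcount
    have h1 : List.countP (qk n k) [((⟨k, hk2⟩ : Fin n), true)] = 1 := by
      simp [qk]
    omega

end Machine


end AuxNT

namespace AuxNT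
open FreeGroup List

variable {α : Type*} [DecidableEq α]

lemma cycRed_M_ne_nil {L : List (α × Bool)} (hLred : IsRed L) (hLne : L ≠ []) :
    (cycRed L).2 ≠ [] := by
  intro hM
  have hdec := cycRed_decomp L
  rw [hM] at hdec
  rcases hC : (cycRed L).1 with _ | ⟨a, C'⟩
  · rw [hC] at hdec
    simp at hdec
    exact hLne hdec
  · rw [hC] at hdec
    have hred2 : IsRed (((a :: C') ++ []) ++ FreeGroup.invRev (a :: C')) := by
      rw [← hdec]; exact hLred
    have hj := (List.isChain_append.1 hred2).2.2
    have hx : (a :: C').getLast (by simp) ∈ ((a :: C') ++ []).getLast? := by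
      rw [List.append_nil, List.getLast?_eq_getLast (by simp)]
      rfl
    have hy : invL ((a :: C').getLast (by simp)) ∈ (FreeGroup.invRev (a :: C')).head? := by
      rw [head?_invRev, List.getLast?_eq_getLast (by simp)]
      rfl
    exact hj _ hx _ hy rfl

lemma two_le_countP {L : List (α × Bool)} (q : α × Bool → Bool)
    (hlen : 2 ≤ L.length)
    (hh : ∀ a ∈ L.head?, q a) (hl : ∀ a ∈ L.getLast?, q a) :
    2 ≤ L.countP q := by
  rcases L with _ | ⟨a, L'⟩
  · simp at hlen
  rcases L' with _ | ⟨b, L''⟩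
  · simp at hlen
  have hqa : q a := hh a rfl
  have hql : q ((b :: L'').getLast (by simp)) := by
    apply hl
    rw [List.getLast?_cons_cons, List.getLast?_eq_getLast (by simp)]
    rfl
  have h1 : 0 < (b :: L'').countP q :=
    List.countP_pos_iff.2 ⟨_, List.getLast_mem _, hql⟩
  rw [List.countP_cons, hqa]
  simp only [if_true]
  omega

lemma head?_dropWhile_false (p : α × Bool → Bool) (l : List (α × Bool)) :
    ∀ b ∈ (l.dropWhile p).head?, p b = false := by
  intro b hb
  rcases hd : l.dropWhile p with _ | ⟨c, t⟩
  · rw [hd] at hb; cases hb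
  · have : b = c := by
      rw [hd] at hb
      exact (Option.some_inj.1 (Option.mem_def.1 hb)).symm
    subst this
    have := List.head_dropWhile_not p (l := l) (by rw [hd]; simp)
    rwa [show (l.dropWhile p).head (by rw [hd]; simp) = b by rw [List.head_eq_iff_head?_eq_some]; rw [hd]; rfl] at this

end AuxNT

/-- If `φ̂ ∈ Aut(F_n)` leaves both `⟨x_1,…,x_k⟩` and `⟨x_1,…,x_{k+1}⟩` invariant,
then `φ̂(x_{k+1}) = u·x_{k+1}^{±1}·v` with `u, v ∈ ⟨x_1,…,x_k⟩`. -/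
theorem image_of_next_basis_element (n k : ℕ) (hk1 : 1 ≤ k) (hk2 : k < n)
    (φ : MulAut (FreeGroup (Fin n)))
    (h1 : (firstKSubgroup n k).map φ.toMonoidHom = firstKSubgroup n k)
    (h2 : (firstKSubgroup n (k + 1)).map φ.toMonoidHom = firstKSubgroup n (k + 1)) :
    ∃ u v : FreeGroup (Fin n), u ∈ firstKSubgroup n k ∧ v ∈ firstKSubgroup n k ∧
      (φ (FreeGroup.of ⟨k, hk2⟩) = u * FreeGroup.of ⟨k, hk2⟩ * v ∨
       φ (FreeGroup.of ⟨k, hk2⟩) = u * (FreeGroup.of ⟨k, hk2⟩)⁻¹ * v) := by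
  classical
  obtain ⟨w, hwdef⟩ : ∃ w, w = φ (FreeGroup.of (⟨k, hk2⟩ : Fin n)) := ⟨_, rfl⟩
  have hxK : FreeGroup.of (⟨k, hk2⟩ : Fin n) ∈ firstKSubgroup n (k + 1) :=
    Subgroup.subset_closure ⟨⟨k, hk2⟩, by simp, rfl⟩
  have hwK : w ∈ firstKSubgroup n (k + 1) := by
    rw [← h2, hwdef]
    exact ⟨_, hxK, rfl⟩
  obtain ⟨p, hpdef⟩ : ∃ p : Fin n × Bool → Bool, p = fun a => decide ((a.1 : ℕ) < k) :=
    ⟨_, rfl⟩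
  obtain ⟨W, hWdef⟩ : ∃ W, W = w.toWord := ⟨_, rfl⟩
  obtain ⟨A, hAdef⟩ : ∃ A, A = W.takeWhile p := ⟨_, rfl⟩
  obtain ⟨V, hVdef⟩ : ∃ V, V = W.dropWhile p := ⟨_, rfl⟩
  obtain ⟨V', hV'def⟩ : ∃ X, X = (V.reverse.dropWhile p).reverse := ⟨_, rfl⟩
  obtain ⟨B, hBdef⟩ : ∃ B, B = (V.reverse.takeWhile p).reverse := ⟨_, rfl⟩
  have hwlet : ∀ l ∈ W, (l.1 : ℕ) < k + 1 := by
    rw [hWdef]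
    exact AuxNT.letters_lt_of_mem_firstK hwK
  have hWsplit : W = A ++ V := by
    rw [hAdef, hVdef, List.takeWhile_append_dropWhile]
  have hVsplit : V = V' ++ B := by
    rw [hV'def, hBdef]
    conv_lhs => rw [← List.reverse_reverse V,
      ← List.takeWhile_append_dropWhile (p := p) (l := V.reverse)]
    rw [List.reverse_append]
  have hWred : AuxNT.IsRed W := by rw [hWdef]; exact AuxNT.isRed_toWord w
  have hV'B : AuxNT.IsRed (V' ++ B) := by
    apply AuxNT.isRed_append_right (L₁ := A)
    rw [← hVsplit, ← hWsplit]; exact hWred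
  have hV'red : AuxNT.IsRed V' := AuxNT.isRed_append_left hV'B
  have hAH : FreeGroup.mk A ∈ firstKSubgroup n k := by
    apply AuxNT.mk_mem_firstK
    intro l hl
    rw [hAdef] at hl
    have := List.mem_takeWhile_imp hl
    simpa [hpdef] using this
  have hBH : FreeGroup.mk B ∈ firstKSubgroup n k := by
    apply AuxNT.mk_mem_firstK
    intro l hl
    rw [hBdef, List.mem_reverse] at hl
    have := List.mem_takeWhile_imp hl
    simpa [hpdef] using this
  have hweq : w = FreeGroup.mk A * FreeGroup.mk V' * FreeGroup.mk B := by
    have hw0 : w = FreeGroup.mk W := by rw [hWdef, FreeGroup.mk_toWord]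
    rw [hw0, hWsplit, hVsplit, ← List.append_assoc, ← FreeGroup.mul_mk, ← FreeGroup.mul_mk]
  have hV'sub : ∀ l ∈ V', l ∈ W := by
    intro l hl
    rw [hWsplit, hVsplit]
    exact List.mem_append.2 (Or.inr (List.mem_append.2 (Or.inl hl)))
  have hV'lt : ∀ l ∈ V', (l.1 : ℕ) < k + 1 := fun l hl => hwlet l (hV'sub l hl)
  have hVhead0 : ∀ b ∈ V.head?, p b = false := by
    rw [hVdef]
    exact AuxNT.head?_dropWhile_false p W
  have hV'head : ∀ a ∈ V'.head?, (a.1 : ℕ) = k := by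
    intro a ha
    have haV : a ∈ V.head? := by
      rw [hVsplit, List.head?_append, Option.mem_def.1 ha]
      rfl
    have hpa := hVhead0 a haV
    have hlt : (a.1 : ℕ) < k + 1 := hV'lt a (List.mem_of_mem_head? ha)
    rw [hpdef] at hpa
    simp only [decide_eq_false_iff_not] at hpa
    omega
  have hV'last : ∀ a ∈ V'.getLast?, (a.1 : ℕ) = k := by
    intro a ha
    have hrev : V'.reverse = V.reverse.dropWhile p := by
      rw [hV'def, List.reverse_reverse]
    have ha' : a ∈ (V.reverse.dropWhile p).head? := by
      rw [← hrev, List.head?_reverse]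
      exact ha
    have hpa := AuxNT.head?_dropWhile_false p V.reverse a ha'
    have hmem : a ∈ V' := List.mem_of_mem_getLast? ha
    have hlt : (a.1 : ℕ) < k + 1 := hV'lt a hmem
    rw [hpdef] at hpa
    simp only [decide_eq_false_iff_not] at hpa
    omega
  -- x is in the subgroup generated by the H-generators and mk V'
  have hxG : FreeGroup.of (⟨k, hk2⟩ : Fin n) ∈ Subgroup.closure
      ((FreeGroup.of '' {i : Fin n | (i : ℕ) < k}) ∪ {FreeGroup.mk V'}) := by
    have hHG' : firstKSubgroup n k ≤ Subgroup.closure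
        ((FreeGroup.of '' {i : Fin n | (i : ℕ) < k}) ∪ {FreeGroup.mk V'}) :=
      Subgroup.closure_mono Set.subset_union_left
    have hwG' : w ∈ Subgroup.closure
        ((FreeGroup.of '' {i : Fin n | (i : ℕ) < k}) ∪ {FreeGroup.mk V'}) := by
      rw [hweq]
      exact Subgroup.mul_mem _ (Subgroup.mul_mem _ (hHG' hAH)
        (Subgroup.subset_closure (Set.mem_union_right _ rfl))) (hHG' hBH)
    have hKG' : firstKSubgroup n (k + 1) ≤ Subgroup.closure
        ((FreeGroup.of '' {i : Fin n | (i : ℕ) < k}) ∪ {FreeGroup.mk V'}) := by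
      conv_lhs => rw [← h2]
      rw [firstKSubgroup, MonoidHom.map_closure, Subgroup.closure_le]
      rintro _ ⟨_, ⟨i, hi, rfl⟩, rfl⟩
      simp only [Set.mem_setOf_eq] at hi
      by_cases hik : (i : ℕ) < k
      · have : φ.toMonoidHom (FreeGroup.of i) ∈ firstKSubgroup n k := by
          rw [← h1]
          exact ⟨FreeGroup.of i, Subgroup.subset_closure ⟨i, hik, rfl⟩, rfl⟩
        exact hHG' this
      · have hik' : (i : ℕ) = k := by omega
        have : i = (⟨k, hk2⟩ : Fin n) := Fin.ext hik'
        subst this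
        rw [show φ.toMonoidHom (FreeGroup.of (⟨k, hk2⟩ : Fin n)) = w from hwdef.symm]
        exact hwG'
    exact hKG' hxK
  -- case analysis on V'
  rcases hV'cases : V' with _ | ⟨a, V''⟩
  · -- V' empty : x ∈ H, contradiction
    exfalso
    have hone : FreeGroup.mk V' = 1 := by rw [hV'cases]; rfl
    have hxH : FreeGroup.of (⟨k, hk2⟩ : Fin n) ∈ firstKSubgroup n k := by
      have hle : Subgroup.closure
          ((FreeGroup.of '' {i : Fin n | (i : ℕ) < k}) ∪ {FreeGroup.mk V'})
          ≤ firstKSubgroup n k := by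
        rw [Subgroup.closure_le]
        rintro g (hg | hg)
        · exact Subgroup.subset_closure hg
        · rw [Set.mem_singleton_iff] at hg
          rw [hg, hone]
          exact Subgroup.one_mem _
      exact hle hxG
    have := AuxNT.letters_lt_of_mem_firstK hxH ((⟨k, hk2⟩ : Fin n), true)
      (by rw [FreeGroup.toWord_of]; simp)
    simp at this
  rcases hV''cases : V'' with _ | ⟨b, V'''⟩
  · -- V' a single letter of index k : the goal
    subst hV''cases
    have hak : (a.1 : ℕ) = k := hV'head a (by rw [hV'cases]; rfl)
    have ha1 : a.1 = (⟨k, hk2⟩ : Fin n) := Fin.ext hak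
    refine ⟨FreeGroup.mk A, FreeGroup.mk B, hAH, hBH, ?_⟩
    rw [← hwdef, hweq, hV'cases]
    rcases hab : a.2 with _ | _
    · right
      have : FreeGroup.mk [a] = (FreeGroup.of (⟨k, hk2⟩ : Fin n))⁻¹ := by
        rw [AuxNT.of_eq_mk, FreeGroup.inv_mk]
        congr 1
        simp only [FreeGroup.invRev, List.map, List.reverse_singleton]
        rw [show a = (a.1, a.2) from rfl, hab, ha1]
        rfl
      rw [this]
    · left
      have : FreeGroup.mk [a] = FreeGroup.of (⟨k, hk2⟩ : Fin n) := by
        rw [AuxNT.of_eq_mk]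
        congr 1
        rw [show a = (a.1, a.2) from rfl, hab, ha1]
      rw [this]
  · -- V' has length ≥ 2 : contradiction by the Nielsen machine
    exfalso
    rw [hV''cases] at hV'cases
    have hlen : 2 ≤ V'.length := by rw [hV'cases]; simp
    have hLne : V' ≠ [] := by rw [hV'cases]; simp
    clear hV'cases hV''cases
    obtain ⟨CC, hCCdef⟩ : ∃ X, X = (AuxNT.cycRed V').1 := ⟨_, rfl⟩
    obtain ⟨MM, hMMdef⟩ : ∃ X, X = (AuxNT.cycRed V').2 := ⟨_, rfl⟩
    have hdecomp : V' = CC ++ MM ++ FreeGroup.invRev CC := by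
      rw [hCCdef, hMMdef]; exact AuxNT.cycRed_decomp V'
    have hMne : MM ≠ [] := by
      rw [hMMdef]; exact AuxNT.cycRed_M_ne_nil hV'red hLne
    have hred' : AuxNT.IsRed (CC ++ MM ++ FreeGroup.invRev CC) := by
      rw [← hdecomp]; exact hV'red
    have hcyc : ∀ ml ∈ MM.getLast?, ∀ mh ∈ MM.head?, mh ≠ AuxNT.invL ml := by
      rw [hMMdef]; exact AuxNT.cycRed_cyc V'
    have hCChead : CC ≠ [] → CC.head? = V'.head? := by
      intro h
      rw [hCCdef]
      exact AuxNT.cycRed_head V' (by rw [← hCCdef]; exact h)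
    have hMMeq : CC = [] → MM = V' := by
      intro h
      rw [hMMdef]
      exact AuxNT.cycRed_nil_snd V' (by rw [← hCCdef]; exact h)
    have hbh : ∀ m : ℤ, m ≠ 0 → ∀ a ∈ (AuxNT.blockW CC MM m).head?, (a.1 : ℕ) = k := by
      intro m hm a ha
      rw [AuxNT.blockW_head CC MM hMne hm] at ha
      split at ha
      · have hMM : MM = V' := hMMeq ‹CC = []›
        rw [AuxNT.midW_head MM hMne hm] at ha
        split at ha
        · exact hV'head a (by rw [← hMM]; exact ha)
        · rcases Option.map_eq_some_iff.1 (Option.mem_def.1 ha) with ⟨b, hb, rfl⟩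
          have : (b.1 : ℕ) = k := hV'last b (by rw [← hMM]; exact hb)
          simpa [AuxNT.invL] using this
      · rw [hCChead ‹¬CC = []›] at ha
        exact hV'head a ha
    have hbl : ∀ m : ℤ, m ≠ 0 → ∀ a ∈ (AuxNT.blockW CC MM m).getLast?, (a.1 : ℕ) = k := by
      intro m hm a ha
      rw [AuxNT.blockW_last CC MM hMne hm] at ha
      split at ha
      · have hMM : MM = V' := hMMeq ‹CC = []›
        rw [AuxNT.midW_last MM hMne hm] at ha
        split at ha
        · exact hV'last a (by rw [← hMM]; exact ha)
        · rcases Option.map_eq_some_iff.1 (Option.mem_def.1 ha) with ⟨b, hb, rfl⟩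
          have : (b.1 : ℕ) = k := hV'head b (by rw [← hMM]; exact hb)
          simpa [AuxNT.invL] using this
      · rcases Option.map_eq_some_iff.1 (Option.mem_def.1 ha) with ⟨b, hb, rfl⟩
        rw [hCChead ‹¬CC = []›] at hb
        have : (b.1 : ℕ) = k := hV'head b hb
        simpa [AuxNT.invL] using this
    have hbc : ∀ m : ℤ, m ≠ 0 → 2 ≤ (AuxNT.blockW CC MM m).countP (AuxNT.qk n k) := by
      intro m hm
      rw [AuxNT.blockW_countP CC MM (AuxNT.qk n k) (AuxNT.qk_invL n k)]
      by_cases hCC : CC = []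
      · have hMM : MM = V' := hMMeq hCC
        have h2c : 2 ≤ MM.countP (AuxNT.qk n k) := by
          rw [hMM]
          exact AuxNT.two_le_countP _ hlen
            (fun a ha => by simp [AuxNT.qk, hV'head a ha])
            (fun a ha => by simp [AuxNT.qk, hV'last a ha])
        have := AuxNT.midW_countP MM hMne hm (AuxNT.qk n k) (AuxNT.qk_invL n k)
        omega
      · have hCh : CC.head? = V'.head? := hCChead hCC
        rcases List.exists_cons_of_ne_nil hCC with ⟨c0, CC', hcc⟩
        have hc0 : (c0.1 : ℕ) = k := by
          apply hV'head c0
          rw [← hCh, hcc]; rfl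
        have h1c : 0 < CC.countP (AuxNT.qk n k) :=
          List.countP_pos_iff.2 ⟨c0, by rw [hcc]; exact List.mem_cons_self,
            by simp [AuxNT.qk, hc0]⟩
        omega
    have hw1eq : FreeGroup.mk V'
        = FreeGroup.mk CC * FreeGroup.mk MM * (FreeGroup.mk CC)⁻¹ := by
      conv_lhs => rw [hdecomp]
      rw [← FreeGroup.mul_mk, ← FreeGroup.mul_mk, FreeGroup.inv_mk]
    have hnot := AuxNT.x_not_mem CC MM hred' hMne hcyc hbh hbl hbc hk2
    rw [← hw1eq] at hnot
    exact hnot hxG
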